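/- Let t₀ ∈ ℂ∖{0,1} and b₀ ∈ ℂ. Let q₁, q₂, P₁, P₂ be holomorphic functions on a neighborhood of t₀ with (q₁(t₀), q₂(t₀), P₁(t₀), P₂(t₀)) = (1, b₀, 0, 0), which satisfy on that neighborhood equation (E3) of the W₀₁-system together with the denominator-cleared forms of (E1), (E2) and (E4) (each obtained by multiplying both sides by P₁). Then P₁′(t₀) = −1/t₀ and q₁′(t₀) = −α₀/t₀. -/

import Mathlib

/-- A holomorphic solution of the `W₀₁`-system (in the denominator-cleared form)
through the point `(1, b₀, 0, 0)` of the accessible singularity `C₂^{(01)}`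
satisfies `P₁′(t₀) = −1/t₀` and `q₁′(t₀) = −α₀/t₀`. -/
theorem leading_coefficients_at_C2_01
    (α₀ α₁ α₂ α₃ α₄ α₅ η : ℂ) (hsum : α₀ + α₁ + α₂ + α₃ + α₄ + α₅ = 1)
    (t₀ : ℂ) (ht₀0 : t₀ ≠ 0) (ht₀1 : t₀ ≠ 1) (b₀ : ℂ)
    (U : Set ℂ) (hUopen : IsOpen U) (ht₀U : t₀ ∈ U)
    (q₁ q₂ P₁ P₂ : ℂ → ℂ)
    (hq₁ : DifferentiableOn ℂ q₁ U) (hq₂ : DifferentiableOn ℂ q₂ U)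
    (hP₁ : DifferentiableOn ℂ P₁ U) (hP₂ : DifferentiableOn ℂ P₂ U)
    (hinit₁ : q₁ t₀ = 1) (hinit₂ : q₂ t₀ = b₀) (hinit₃ : P₁ t₀ = 0) (hinit₄ : P₂ t₀ = 0)
    -- (E1), cleared of its denominator `P₁`
    (hE₁ : ∀ t ∈ U, t * (t - 1) * deriv q₁ t * P₁ t =
      ((α₁ + η) * (q₁ t) ^ 2 + α₃ * (q₁ t) * (q₂ t) +
          ((α₀ + α₅ - η) * t - (α₀ + α₁ + η)) * (q₁ t) - α₃ * (q₂ t) - (α₅ - η) * t) *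
        P₁ t +
        ((q₁ t - 1) * (q₁ t + q₂ t) * (q₂ t - t) * P₂ t +
          2 * (q₁ t) * (q₁ t - 1) * (q₁ t - t)))
    -- (E2), cleared of its denominator `P₁`
    (hE₂ : ∀ t ∈ U, t * (t - 1) * deriv q₂ t * P₁ t =
      (α₁ * (q₁ t) * (q₂ t) + (α₃ + η) * (q₂ t) ^ 2 - α₁ * t * (q₁ t) -
          ((α₃ + α₄ + η - 1) * t - (α₄ + α₅ - η - 1)) * (q₂ t) - (α₅ - η) * t) *
        P₁ t +
        (2 * (q₂ t) * (q₂ t - 1) * (q₂ t - t) * P₂ t +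
          (q₁ t - 1) * (q₁ t + q₂ t) * (q₂ t - t)))
    -- (E3)
    (hE₃ : ∀ t ∈ U, t * (t - 1) * deriv P₁ t =
      α₁ * η * (P₁ t) ^ 2 +
        (2 * (α₁ + η) * (q₁ t) + α₃ * (q₂ t) + (α₀ + α₅ - η) * t - (α₀ + α₁ + η)) *
          P₁ t +
        α₁ * (q₂ t - t) * P₁ t * P₂ t +
        (2 * (q₁ t) + q₂ t - 1) * (q₂ t - t) * P₂ t +
        3 * (q₁ t) ^ 2 - 2 * (t + 1) * (q₁ t) + t)
    -- (E4), cleared of its denominator `P₁`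
    (hE₄ : ∀ t ∈ U, t * (t - 1) * deriv P₂ t * P₁ t =
      (η * (α₁ * P₂ t - α₃) * P₁ t + α₁ * (q₂ t - t) * (P₂ t) ^ 2 +
          ((α₁ + 2 * η) * (q₁ t) - (α₃ + 2 * η) * (q₂ t) - (α₁ + α₂) * t + α₂ + α₃) *
            P₂ t -
          α₃ * (q₁ t - 1)) *
        P₁ t +
        ((2 * (q₁ t) * (q₂ t) - 2 * (q₂ t) ^ 2 - 2 * t * (q₁ t) + (t + 1) * (q₂ t)) *
            (P₂ t) ^ 2 +
          (2 * (q₁ t) ^ 2 - 2 * (q₁ t) * (q₂ t) - (t + 1) * (q₁ t) + 2 * (q₂ t)) *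
            P₂ t)) :
    deriv P₁ t₀ = -1 / t₀ ∧ deriv q₁ t₀ = -α₀ / t₀ := by
  have hUm : U ∈ nhds t₀ := hUopen.mem_nhds ht₀U
  -- Step 1: P₁'(t₀) from (E3)
  have h3 := hE₃ t₀ ht₀U
  rw [hinit₁, hinit₂, hinit₃, hinit₄] at h3
  have ht₀1' : t₀ - 1 ≠ 0 := sub_ne_zero.mpr ht₀1
  have hc : deriv P₁ t₀ = -1 / t₀ := by
    have h : (t₀ - 1) * (deriv P₁ t₀ * t₀ + 1) = 0 := by linear_combination h3
    rcases mul_eq_zero.mp h with h | h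
    · exact absurd h ht₀1'
    · field_simp
      linear_combination h
  refine ⟨hc, ?_⟩
  -- differentiability data
  have Ha : HasDerivAt q₁ (deriv q₁ t₀) t₀ := (hq₁.differentiableAt hUm).hasDerivAt
  have Hb : HasDerivAt q₂ (deriv q₂ t₀) t₀ := (hq₂.differentiableAt hUm).hasDerivAt
  have Hc : HasDerivAt P₁ (deriv P₁ t₀) t₀ := (hP₁.differentiableAt hUm).hasDerivAt
  have Hd : HasDerivAt P₂ (deriv P₂ t₀) t₀ := (hP₂.differentiableAt hUm).hasDerivAt
  have Ha' : HasDerivAt (deriv q₁) (deriv (deriv q₁) t₀) t₀ :=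
    (((hq₁.analyticOnNhd hUopen).deriv t₀ ht₀U).differentiableAt).hasDerivAt
  have Hi : HasDerivAt (fun t : ℂ => t) 1 t₀ := hasDerivAt_id t₀
  -- LHS of E1 has a derivative
  have Hf := ((Hi.mul (Hi.sub_const 1)).mul Ha').mul Hc
  -- RHS of E1 has a derivative
  have Hg :=
    ((((((Ha.pow 2).const_mul (α₁ + η)).add ((Ha.const_mul α₃).mul Hb)).add
        (((Hi.const_mul (α₀ + α₅ - η)).sub_const (α₀ + α₁ + η)).mul Ha)).sub
        (Hb.const_mul α₃)).sub (Hi.const_mul (α₅ - η))).mul Hc |>.add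
      (((((Ha.sub_const 1).mul (Ha.add Hb)).mul (Hb.sub Hi)).mul Hd).add
        ((((Ha.const_mul 2).mul (Ha.sub_const 1))).mul (Ha.sub Hi)))
  have hev : (fun t => t * (t - 1) * deriv q₁ t * P₁ t) =ᶠ[nhds t₀]
      (fun t =>
      ((α₁ + η) * (q₁ t) ^ 2 + α₃ * (q₁ t) * (q₂ t) +
          ((α₀ + α₅ - η) * t - (α₀ + α₁ + η)) * (q₁ t) - α₃ * (q₂ t) - (α₅ - η) * t) *
        P₁ t +
        ((q₁ t - 1) * (q₁ t + q₂ t) * (q₂ t - t) * P₂ t +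
          2 * (q₁ t) * (q₁ t - 1) * (q₁ t - t))) :=
    Filter.eventuallyEq_of_mem hUm hE₁
  have Hf' := Hf.congr_of_eventuallyEq hev.symm
  have key := Hf'.unique Hg
  simp only [Pi.mul_apply, Pi.add_apply, Pi.sub_apply, Pi.pow_apply] at key
  rw [hinit₁, hinit₂, hinit₃, hinit₄, hc] at key
  field_simp at key
  have h : (t₀ - 1) * (deriv q₁ t₀ * t₀ + α₀) * t₀ = 0 := by linear_combination t₀ * key
  rcases mul_eq_zero.mp h with h | h
  · rcases mul_eq_zero.mp h with h | h
    · exact absurd h ht₀1'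
    · field_simp
      linear_combination h
  · exact absurd h ht₀0
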